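/- arXiv:1504.08185 — 3 statements merged into one kernel-verified Lean document; each statement's English description precedes it below -/
import Mathlib

section
/- Let R be a commutative ring. Every formal power series f ∈ 1 + tR[[t]] admits a unique expression f = ∏_{n≥1} (1 − a_n t^n) with a_n ∈ R, where the infinite product converges in the t-adic topology. -/
/-!
STATEMENT 1: Every power series `f ∈ 1 + tR[[t]]` has a unique expression
`f = ∏_{n ≥ 1} (1 - a_n t^n)`, the infinite product converging t-adically.
Convergence is expressed by: for every `N`, the partial product
`∏_{n ≤ N} (1 - a_n t^n)` agrees with `f` modulo `t^{N+1}` (we index by `ℕ` and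
normalize `a_0 = 0`, so the `n = 0` factor is `1`).
-/

open PowerSeries

private noncomputable def gSeq {R : Type*} [CommRing R] (f : PowerSeries R) :
    ℕ → R × PowerSeries R
  | 0 => (0, 1)
  | n + 1 =>
      let P := (gSeq f n).2
      let a := -(PowerSeries.coeff (n + 1) (f - P))
      (a, P * (1 - PowerSeries.C a * PowerSeries.X ^ (n + 1)))

private lemma gSeq_snd_const {R : Type*} [CommRing R] (f : PowerSeries R) (N : ℕ) :
    PowerSeries.constantCoeff (gSeq f N).2 = 1 := by
  induction N with
  | zero => simp [gSeq]
  | succ n ih =>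
      simp [gSeq, map_mul, map_sub, map_pow, ih]

private lemma gSeq_prod {R : Type*} [CommRing R] (f : PowerSeries R) (N : ℕ) :
    ∏ n ∈ Finset.range (N + 1),
      (1 - PowerSeries.C ((gSeq f n).1) * PowerSeries.X ^ n) = (gSeq f N).2 := by
  induction N with
  | zero => simp [gSeq]
  | succ n ih =>
      rw [Finset.prod_range_succ, ih]
      rfl

private lemma gSeq_dvd {R : Type*} [CommRing R] (f : PowerSeries R)
    (hf : PowerSeries.constantCoeff f = 1) (N : ℕ) :
    (PowerSeries.X : PowerSeries R) ^ (N + 1) ∣ f - (gSeq f N).2 := by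
  induction N with
  | zero =>
      rw [pow_one, PowerSeries.X_dvd_iff, map_sub, hf]
      simp [gSeq]
  | succ n ih =>
      rw [PowerSeries.X_pow_dvd_iff] at ih ⊢
      intro m hm
      have key : f - (gSeq f (n + 1)).2
          = (f - (gSeq f n).2) +
            PowerSeries.C (-(PowerSeries.coeff (n + 1) (f - (gSeq f n).2)))
              * (PowerSeries.X ^ (n + 1) * (gSeq f n).2) := by
        show f - ((gSeq f n).2 * _) = _
        ring
      rw [key, map_add]
      rcases lt_or_eq_of_le (Nat.lt_succ_iff.mp hm) with h | h
      · rw [ih m h, PowerSeries.coeff_C_mul]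
        have : PowerSeries.coeff m (PowerSeries.X ^ (n + 1) * (gSeq f n).2) = 0 := by
          have : (PowerSeries.X : PowerSeries R) ^ (n + 1) ∣
              PowerSeries.X ^ (n + 1) * (gSeq f n).2 := Dvd.intro _ rfl
          exact PowerSeries.X_pow_dvd_iff.mp this m h
        rw [this, mul_zero, zero_add]
      · subst h
        have hx : PowerSeries.coeff (n + 1) (PowerSeries.X ^ (n + 1) * (gSeq f n).2)
            = PowerSeries.coeff 0 (gSeq f n).2 := by
          simpa using PowerSeries.coeff_X_pow_mul (gSeq f n).2 (n + 1) 0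
        rw [PowerSeries.coeff_C_mul, hx, PowerSeries.coeff_zero_eq_constantCoeff,
          gSeq_snd_const, mul_one]
        ring

private lemma prod_const_one {R : Type*} [CommRing R] (a : ℕ → R) (h0 : a 0 = 0) (m : ℕ) :
    PowerSeries.constantCoeff
      (∏ n ∈ Finset.range m, (1 - PowerSeries.C (a n) * PowerSeries.X ^ n)) = 1 := by
  rw [map_prod]
  apply Finset.prod_eq_one
  intro k _
  cases k with
  | zero => simp [h0]
  | succ j => simp

theorem stmt_1 (R : Type*) [CommRing R] (f : PowerSeries R)
    (hf : PowerSeries.constantCoeff f = 1) :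
    ∃! a : ℕ → R, a 0 = 0 ∧ ∀ N : ℕ,
      f - ∏ n ∈ Finset.range (N + 1), (1 - PowerSeries.C (a n) * PowerSeries.X ^ n)
        ∈ Ideal.span {(PowerSeries.X : PowerSeries R) ^ (N + 1)} := by
  refine ⟨fun n => (gSeq f n).1, ⟨rfl, fun N => ?_⟩, ?_⟩
  · rw [Ideal.mem_span_singleton, gSeq_prod]
    exact gSeq_dvd f hf N
  · rintro b ⟨hb0, hb⟩
    funext n
    induction n using Nat.strong_induction_on with
    | _ n ih =>
      cases n with
      | zero => simpa [gSeq] using hb0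
      | succ m =>
        set a : ℕ → R := fun n => (gSeq f n).1 with ha_def
        have ha0 : a 0 = 0 := rfl
        have ha : ∀ N : ℕ,
            f - ∏ n ∈ Finset.range (N + 1), (1 - PowerSeries.C (a n) * PowerSeries.X ^ n)
              ∈ Ideal.span {(PowerSeries.X : PowerSeries R) ^ (N + 1)} := by
          intro N
          rw [Ideal.mem_span_singleton, ha_def, gSeq_prod]
          exact gSeq_dvd f hf N
        have hpre : ∀ k ∈ Finset.range (m + 1),
            (1 - PowerSeries.C (b k) * PowerSeries.X ^ k)
              = (1 - PowerSeries.C (a k) * PowerSeries.X ^ k) := by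
          intro k hk
          rw [ih k (Finset.mem_range.mp hk)]
        set P : PowerSeries R :=
          ∏ n ∈ Finset.range (m + 1), (1 - PowerSeries.C (a n) * PowerSeries.X ^ n) with hP
        have hQa : ∏ n ∈ Finset.range (m + 1 + 1),
            (1 - PowerSeries.C (a n) * PowerSeries.X ^ n)
              = P * (1 - PowerSeries.C (a (m + 1)) * PowerSeries.X ^ (m + 1)) := by
          rw [Finset.prod_range_succ]
        have hQb : ∏ n ∈ Finset.range (m + 1 + 1),
            (1 - PowerSeries.C (b n) * PowerSeries.X ^ n)
              = P * (1 - PowerSeries.C (b (m + 1)) * PowerSeries.X ^ (m + 1)) := by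
          rw [Finset.prod_range_succ, Finset.prod_congr rfl hpre]
        have h1 := ha (m + 1)
        have h2 := hb (m + 1)
        rw [Ideal.mem_span_singleton] at h1 h2
        have hdiff : (PowerSeries.X : PowerSeries R) ^ (m + 1 + 1) ∣
            PowerSeries.C (a (m + 1) - b (m + 1)) * (PowerSeries.X ^ (m + 1) * P) := by
          have : PowerSeries.C (a (m + 1) - b (m + 1)) * (PowerSeries.X ^ (m + 1) * P)
              = (f - ∏ n ∈ Finset.range (m + 1 + 1),
                  (1 - PowerSeries.C (a n) * PowerSeries.X ^ n))
                - (f - ∏ n ∈ Finset.range (m + 1 + 1),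
                  (1 - PowerSeries.C (b n) * PowerSeries.X ^ n)) := by
            rw [hQa, hQb, map_sub]
            ring
          rw [this]
          exact dvd_sub h1 h2
        have hc := PowerSeries.X_pow_dvd_iff.mp hdiff (m + 1) (Nat.lt_succ_self _)
        have hx : PowerSeries.coeff (m + 1) (PowerSeries.X ^ (m + 1) * P)
            = PowerSeries.coeff 0 P := by
          simpa using PowerSeries.coeff_X_pow_mul P (m + 1) 0
        have hPc : PowerSeries.coeff 0 P = 1 := by
          rw [PowerSeries.coeff_zero_eq_constantCoeff]
          exact prod_const_one a ha0 (m + 1)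
        rw [PowerSeries.coeff_C_mul, hx, hPc, mul_one, sub_eq_zero] at hc
        exact hc.symm
end

section
/- Let R be a commutative ring, r ≥ 1, a ∈ R, n ≥ 1, and s = gcd(r, n). The r-th Frobenius on big Witt vectors sends the class of 1 − at^n to the class of (1 − a^{r/s} t^{n/s})^s. -/
/-!
STATEMENT 6: Big Witt vectors are not in Mathlib; we represent `W(R)` by the group
`1 + tR[[t]]` (addition = multiplication of power series).  The `r`-th Frobenius is
characterized as a family of operations, functorial in the ring, preserving constant
term 1, and acting on ghost components (defined via the logarithmic derivative) by
`gh_m(F_r f) = gh_{rm}(f)`.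

The statement: `F_r` sends the class of `1 - a t^n` to the class of
`(1 - a^{r/s} t^{n/s})^s`, where `s = gcd(r,n)`.
-/

/-- The `n`-th ghost component: `gh n f = -(coefficient of t^n in t·f'·f⁻¹)`. -/
noncomputable def ghostCoeff {R : Type*} [CommRing R] (n : ℕ) (f : PowerSeries R) : R :=
  - PowerSeries.coeff n (PowerSeries.X * f.derivativeFun * f.invOfUnit 1)

universe u

namespace Stmt6Aux

open PowerSeries

variable {R : Type*} [CommRing R]

lemma invOfUnit_unique {f g : R⟦X⟧} (hf : constantCoeff f = 1) (h : f * g = 1) :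
    f.invOfUnit 1 = g := by
  have h2 : f.invOfUnit 1 * f = 1 := invOfUnit_mul f 1 (by simpa using hf)
  calc f.invOfUnit 1 = f.invOfUnit 1 * (f * g) := by rw [h, mul_one]
    _ = (f.invOfUnit 1 * f) * g := by ring
    _ = g := by rw [h2, one_mul]

lemma ghostCoeff_mul {f g : R⟦X⟧} (hf : constantCoeff f = 1)
    (hg : constantCoeff g = 1) (m : ℕ) :
    ghostCoeff m (f * g) = ghostCoeff m f + ghostCoeff m g := by
  have hfg : constantCoeff (f * g) = 1 := by rw [map_mul, hf, hg, mul_one]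
  have hfi : f * f.invOfUnit 1 = 1 := mul_invOfUnit f 1 (by simpa using hf)
  have hgi : g * g.invOfUnit 1 = 1 := mul_invOfUnit g 1 (by simpa using hg)
  have hinv : (f * g).invOfUnit 1 = f.invOfUnit 1 * g.invOfUnit 1 := by
    apply invOfUnit_unique hfg
    calc f * g * (f.invOfUnit 1 * g.invOfUnit 1)
        = (f * f.invOfUnit 1) * (g * g.invOfUnit 1) := by ring
      _ = 1 := by rw [hfi, hgi, mul_one]
  have key : X * (f * g).derivativeFun * (f * g).invOfUnit 1
      = X * f.derivativeFun * f.invOfUnit 1 + X * g.derivativeFun * g.invOfUnit 1 := by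
    rw [derivativeFun_mul, hinv, smul_eq_mul, smul_eq_mul]
    calc X * (f * g.derivativeFun + g * f.derivativeFun) * (f.invOfUnit 1 * g.invOfUnit 1)
        = (X * g.derivativeFun * g.invOfUnit 1) * (f * f.invOfUnit 1)
          + (X * f.derivativeFun * f.invOfUnit 1) * (g * g.invOfUnit 1) := by ring
      _ = _ := by rw [hfi, hgi, mul_one, mul_one]; ring
  simp only [ghostCoeff, key, map_add, neg_add]

lemma ghostCoeff_one (m : ℕ) : ghostCoeff m (1 : R⟦X⟧) = 0 := by
  have : (1 : R⟦X⟧).derivativeFun = 0 := by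
    simpa using derivativeFun_one (R := R)
  simp [ghostCoeff, this]

lemma ghostCoeff_pow {f : R⟦X⟧} (hf : constantCoeff f = 1) (s m : ℕ) :
    ghostCoeff m (f ^ s) = (s : R) * ghostCoeff m f := by
  induction s with
  | zero => simpa using ghostCoeff_one m
  | succ k ih =>
      have hfk : constantCoeff (f ^ k) = 1 := by rw [map_pow, hf, one_pow]
      rw [pow_succ, ghostCoeff_mul hfk hf, ih]
      push_cast
      ring

lemma geom_inv (d : ℕ) (hd : 1 ≤ d) (b : R) :
    (1 - C b * X ^ d) * (mk fun k => if d ∣ k then b ^ (k / d) else 0) = 1 := by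
  ext m
  rw [sub_mul, one_mul, map_sub, mul_assoc, PowerSeries.coeff_C_mul,
    PowerSeries.coeff_X_pow_mul', coeff_mk, PowerSeries.coeff_one]
  rcases Nat.eq_zero_or_pos m with rfl | hm
  · rw [if_neg (by omega : ¬ d ≤ 0), if_pos (dvd_zero d), if_pos rfl]
    simp
  · rw [if_neg (by omega : ¬ m = 0)]
    by_cases hdm : d ≤ m
    · rw [if_pos hdm, coeff_mk]
      by_cases hdvd : d ∣ m
      · have h2 : d ∣ m - d := Nat.dvd_sub hdvd dvd_rfl
        rw [if_pos hdvd, if_pos h2]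
        have hq : 1 ≤ m / d := (Nat.one_le_div_iff (by omega)).2 hdm
        have hmd : (m - d) / d = m / d - 1 := by
          rcases hdvd with ⟨c, rfl⟩
          rw [Nat.mul_div_cancel_left c (by omega)]
          have : d * c - d = d * (c - 1) := by
            rw [Nat.mul_sub, mul_one]
          rw [this, Nat.mul_div_cancel_left _ (by omega)]
        rw [hmd, ← pow_succ']
        have : m / d - 1 + 1 = m / d := by omega
        rw [this]
        ring
      · have h2 : ¬ d ∣ m - d := fun h => hdvd (by
          have := Nat.dvd_add h (dvd_refl d)
          rwa [Nat.sub_add_cancel hdm] at this)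
        rw [if_neg hdvd, if_neg h2, mul_zero, sub_zero]
    · rw [if_neg hdm, mul_zero, sub_zero, if_neg]
      intro h; exact hdm (Nat.le_of_dvd hm h)

lemma constantCoeff_geom (d : ℕ) (hd : 1 ≤ d) (b : R) :
    constantCoeff (1 - C b * X ^ d) = 1 := by
  rw [map_sub, map_mul, map_pow, constantCoeff_X, zero_pow (by omega), mul_zero,
    map_one, sub_zero]

lemma coeff_derivativeFun' (f : R⟦X⟧) (n : ℕ) :
    coeff n f.derivativeFun = coeff (n + 1) f * (n + 1) :=
  coeff_derivative f n

lemma X_mul_der_geom (d : ℕ) (hd : 1 ≤ d) (b : R) :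
    X * (1 - C b * X ^ d).derivativeFun = - (C ((d : R) * b) * X ^ d) := by
  ext k
  rw [map_neg, PowerSeries.coeff_C_mul, PowerSeries.coeff_X_pow]
  by_cases hk : 1 ≤ k
  · obtain ⟨j, rfl⟩ : ∃ j, k = j + 1 := ⟨k - 1, by omega⟩
    rw [PowerSeries.coeff_succ_X_mul, coeff_derivativeFun']
    set k := j + 1 with hk1
    rw [map_sub, PowerSeries.coeff_one, PowerSeries.coeff_C_mul,
      PowerSeries.coeff_X_pow, if_neg (by omega : ¬ k = 0)]
    by_cases hkd : k = d
    · subst hkd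
      push_cast [hk1]
      ring
    · simp only [hkd, if_false]
      ring
  · have hk0 : k = 0 := by omega
    subst hk0
    rw [PowerSeries.coeff_zero_X_mul, if_neg (by omega : ¬ (0:ℕ) = d), mul_zero, neg_zero]

lemma ghostCoeff_geom (d : ℕ) (hd : 1 ≤ d) (b : R) (m : ℕ) (hm : 1 ≤ m) :
    ghostCoeff m (1 - C b * X ^ d) = if d ∣ m then (d : R) * b ^ (m / d) else 0 := by
  have hinv : (1 - C b * X ^ d).invOfUnit 1
      = mk fun k => if d ∣ k then b ^ (k / d) else 0 :=
    invOfUnit_unique (constantCoeff_geom d hd b) (geom_inv d hd b)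
  rw [ghostCoeff, hinv, X_mul_der_geom d hd b, neg_mul, map_neg, neg_neg,
    mul_assoc, PowerSeries.coeff_C_mul, PowerSeries.coeff_X_pow_mul', coeff_mk]
  by_cases hdm : d ≤ m
  · rw [if_pos hdm]
    by_cases hdvd : d ∣ m
    · have h2 : d ∣ m - d := Nat.dvd_sub hdvd dvd_rfl
      rw [if_pos h2, if_pos hdvd]
      have hq : 1 ≤ m / d := (Nat.one_le_div_iff (by omega)).2 hdm
      have hmd : (m - d) / d = m / d - 1 := by
        rcases hdvd with ⟨c, rfl⟩
        rw [Nat.mul_div_cancel_left c (by omega)]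
        have : d * c - d = d * (c - 1) := by rw [Nat.mul_sub, mul_one]
        rw [this, Nat.mul_div_cancel_left _ (by omega)]
      rw [hmd, mul_assoc, ← pow_succ']
      have : m / d - 1 + 1 = m / d := by omega
      rw [this]
    · have h2 : ¬ d ∣ m - d := fun h => hdvd (by
        have := Nat.dvd_add h (dvd_refl d)
        rwa [Nat.sub_add_cancel hdm] at this)
      rw [if_neg hdvd, if_neg h2, mul_zero]
  · rw [if_neg hdm, mul_zero, if_neg (fun h => hdm (Nat.le_of_dvd (by omega) h))]

lemma ghost_determines {A : Type*} [CommRing A] [Algebra ℚ A] {f g : A⟦X⟧}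
    (hf : constantCoeff f = 1) (hg : constantCoeff g = 1)
    (h : ∀ m : ℕ, 1 ≤ m → ghostCoeff m f = ghostCoeff m g) : f = g := by
  have key : ∀ (f : A⟦X⟧), constantCoeff f = 1 →
      X * f.derivativeFun = (X * f.derivativeFun * f.invOfUnit 1) * f := by
    intro f hf
    have h2 : f.invOfUnit 1 * f = 1 := invOfUnit_mul f 1 (by simpa using hf)
    calc X * f.derivativeFun = X * f.derivativeFun * (f.invOfUnit 1 * f) := by
          rw [h2, mul_one]
      _ = _ := by ring
  have hco : ∀ (j : ℕ), 1 ≤ j →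
      coeff j (X * f.derivativeFun * f.invOfUnit 1)
        = coeff j (X * g.derivativeFun * g.invOfUnit 1) := by
    intro j hj
    have := h j hj
    simpa [ghostCoeff, neg_inj] using this
  have hco0 : coeff 0 (X * f.derivativeFun * f.invOfUnit 1) = 0 ∧
      coeff 0 (X * g.derivativeFun * g.invOfUnit 1) = 0 := by
    constructor <;>
      simp [coeff_zero_eq_constantCoeff, map_mul, mul_assoc, constantCoeff_X]
  ext m
  induction m using Nat.strong_induction_on with
  | _ m ih =>
    rcases Nat.eq_zero_or_pos m with rfl | hm
    · rw [coeff_zero_eq_constantCoeff_apply, coeff_zero_eq_constantCoeff_apply, hf, hg]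
    · obtain ⟨p, rfl⟩ : ∃ p, m = p + 1 := ⟨m - 1, by omega⟩
      have e1 := congrArg (coeff (p+1)) (key f hf)
      have e2 := congrArg (coeff (p+1)) (key g hg)
      rw [coeff_succ_X_mul, coeff_derivativeFun'] at e1 e2
      have hsum : coeff (p+1) ((X * f.derivativeFun * f.invOfUnit 1) * f)
          = coeff (p+1) ((X * g.derivativeFun * g.invOfUnit 1) * g) := by
        rw [PowerSeries.coeff_mul, PowerSeries.coeff_mul]
        apply Finset.sum_congr rfl
        intro x hx
        rw [Finset.HasAntidiagonal.mem_antidiagonal] at hx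
        rcases Nat.eq_zero_or_pos x.1 with h1 | h1
        · rw [h1] at hx ⊢
          rw [hco0.1, hco0.2, zero_mul, zero_mul]
        · have hx2 : x.2 < p + 1 := by omega
          rw [hco x.1 h1, ih x.2 (by omega)]
      have heq : coeff (p+1) f * ((p:A) + 1) = coeff (p+1) g * ((p:A) + 1) :=
        e1.trans (hsum.trans e2.symm)
      have hu : IsUnit ((p:A) + 1) := by
        have h3 : ((p:A) + 1) = algebraMap ℚ A ((p:ℚ) + 1) := by push_cast; ring
        rw [h3]
        exact IsUnit.map _ (isUnit_iff_ne_zero.2 (by positivity))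
      exact hu.mul_right_cancel heq

lemma dvd_iff_aux (r n m : ℕ) (hr : 1 ≤ r) (hn : 1 ≤ n) :
    (n ∣ r * m ↔ (n / Nat.gcd r n) ∣ m) := by
  set s := Nat.gcd r n with hs
  have spos : 0 < s := Nat.gcd_pos_of_pos_left _ (by omega)
  have hsr : s ∣ r := Nat.gcd_dvd_left r n
  have hsn : s ∣ n := Nat.gcd_dvd_right r n
  have cop : Nat.Coprime (r / s) (n / s) := Nat.coprime_div_gcd_div_gcd spos
  constructor
  · intro h
    have h1 : s * (n / s) ∣ s * ((r / s) * m) := by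
      rwa [Nat.mul_div_cancel' hsn, ← mul_assoc, Nat.mul_div_cancel' hsr]
    have h2 : (n / s) ∣ (r / s) * m := (mul_dvd_mul_iff_left (by omega : s ≠ 0)).1 h1
    exact (Nat.Coprime.dvd_of_dvd_mul_left cop.symm h2)
  · intro h
    calc n = s * (n / s) := (Nat.mul_div_cancel' hsn).symm
      _ ∣ s * ((r / s) * m) := mul_dvd_mul_left s (Dvd.dvd.mul_left h _)
      _ = r * m := by rw [← mul_assoc, Nat.mul_div_cancel' hsr]

lemma exp_aux (r n m : ℕ) (hr : 1 ≤ r) (hn : 1 ≤ n) (h : (n / Nat.gcd r n) ∣ m) :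
    (r / Nat.gcd r n) * (m / (n / Nat.gcd r n)) = r * m / n := by
  set s := Nat.gcd r n with hs
  have spos : 0 < s := Nat.gcd_pos_of_pos_left _ (by omega)
  have hsr : s ∣ r := Nat.gcd_dvd_left r n
  have hsn : s ∣ n := Nat.gcd_dvd_right r n
  have dpos : 0 < n / s := Nat.div_pos (Nat.le_of_dvd (by omega) hsn) spos
  obtain ⟨k, rfl⟩ := h
  rw [Nat.mul_div_cancel_left k (by omega)]
  symm
  apply Nat.div_eq_of_eq_mul_left (by omega : 0 < n)
  calc r * (n / s * k) = (s * (r / s)) * (n / s * k) := by rw [Nat.mul_div_cancel' hsr]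
    _ = (s * (n / s)) * (r / s * k) := by ring
    _ = n * (r / s * k) := by rw [Nat.mul_div_cancel' hsn]
    _ = r / s * k * n := by ring

end Stmt6Aux

open PowerSeries Stmt6Aux in
theorem stmt_6 (R : Type u) [CommRing R]
    (F : ∀ (A : Type u) [CommRing A], ℕ → PowerSeries A → PowerSeries A)
    (hFone : ∀ (A : Type u) [CommRing A] (r : ℕ) (f : PowerSeries A), 1 ≤ r →
      PowerSeries.constantCoeff f = 1 → PowerSeries.constantCoeff (F A r f) = 1)
    (hFghost : ∀ (A : Type u) [CommRing A] (r : ℕ) (f : PowerSeries A), 1 ≤ r →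
      PowerSeries.constantCoeff f = 1 →
      ∀ m : ℕ, 1 ≤ m → ghostCoeff m (F A r f) = ghostCoeff (r * m) f)
    (hFnat : ∀ (A B : Type u) [CommRing A] [CommRing B] (φ : A →+* B) (r : ℕ)
      (f : PowerSeries A), 1 ≤ r → PowerSeries.constantCoeff f = 1 →
      PowerSeries.map φ (F A r f) = F B r (PowerSeries.map φ f))
    (r n s : ℕ) (hr : 1 ≤ r) (hn : 1 ≤ n) (hs : s = Nat.gcd r n) (a : R) :
    F R r (1 - PowerSeries.C a * PowerSeries.X ^ n)
      = (1 - PowerSeries.C (a ^ (r / s)) * PowerSeries.X ^ (n / s)) ^ s := by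
  have spos : 0 < s := hs ▸ Nat.gcd_pos_of_pos_left _ (by omega)
  have hsr : s ∣ r := hs ▸ Nat.gcd_dvd_left r n
  have hsn : s ∣ n := hs ▸ Nat.gcd_dvd_right r n
  have dpos : 1 ≤ n / s := Nat.div_pos (Nat.le_of_dvd (by omega) hsn) spos
  have hdvd_iff : ∀ m : ℕ, n ∣ r * m ↔ (n / s) ∣ m := fun m => hs ▸ dvd_iff_aux r n m hr hn
  have hexp : ∀ m : ℕ, (n / s) ∣ m → (r / s) * (m / (n / s)) = r * m / n := fun m h =>
    hs ▸ exp_aux r n m hr hn (hs ▸ h)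
  -- universal rings
  set A := ULift.{u} (Polynomial ℤ) with hA
  set B := ULift.{u} (Polynomial ℚ) with hB
  let ι : A →+* B :=
    ((ULift.ringEquiv (R := Polynomial ℚ)).symm.toRingHom).comp
      ((Polynomial.mapRingHom (Int.castRingHom ℚ)).comp
        (ULift.ringEquiv (R := Polynomial ℤ)).toRingHom)
  let ψ : A →+* R :=
    (Polynomial.eval₂RingHom (Int.castRingHom R) a).comp
      (ULift.ringEquiv (R := Polynomial ℤ)).toRingHom
  set x : A := ULift.up Polynomial.X with hx
  have hψx : ψ x = a := by
    show Polynomial.eval₂ (Int.castRingHom R) a Polynomial.X = a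
    exact Polynomial.eval₂_X _ _
  set b : B := ι x with hb
  have ιinj : Function.Injective ι := by
    intro p q h
    have h1 : Polynomial.map (Int.castRingHom ℚ) p.down
        = Polynomial.map (Int.castRingHom ℚ) q.down := congrArg ULift.down h
    exact ULift.down_injective (Polynomial.map_injective _ Int.cast_injective h1)
  have mapinj : Function.Injective (PowerSeries.map ι) := by
    intro p q hpq
    apply PowerSeries.ext
    intro k
    have := congrArg (PowerSeries.coeff k) hpq
    rw [PowerSeries.coeff_map, PowerSeries.coeff_map] at this
    exact ιinj this
  have hccA : constantCoeff (1 - C x * X ^ n) = 1 := constantCoeff_geom n hn x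
  have univ : F A r (1 - C x * X ^ n) = (1 - C (x ^ (r / s)) * X ^ (n / s)) ^ s := by
    apply mapinj
    rw [hFnat A B ι r _ hr hccA]
    have m1 : PowerSeries.map ι (1 - C x * X ^ n) = 1 - C b * X ^ n := by
      simp [map_sub, map_one, map_mul, map_pow, PowerSeries.map_C, PowerSeries.map_X, hb]
    have m2 : PowerSeries.map ι ((1 - C (x ^ (r / s)) * X ^ (n / s)) ^ s)
        = (1 - C (b ^ (r / s)) * X ^ (n / s)) ^ s := by
      simp [map_sub, map_one, map_mul, map_pow, PowerSeries.map_C, PowerSeries.map_X, hb]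
    rw [m1, m2]
    apply ghost_determines
    · exact hFone B r _ hr (constantCoeff_geom n hn b)
    · rw [map_pow, constantCoeff_geom (n / s) dpos, one_pow]
    · intro m hm
      rw [hFghost B r _ hr (constantCoeff_geom n hn b) m hm,
        ghostCoeff_geom n hn b (r * m) (by exact Nat.one_le_iff_ne_zero.2 (by positivity)),
        ghostCoeff_pow (constantCoeff_geom (n / s) dpos _) s m,
        ghostCoeff_geom (n / s) dpos _ m hm]
      by_cases hc : (n / s) ∣ m
      · rw [if_pos hc, if_pos ((hdvd_iff m).2 hc)]
        have e1 : (s : B) * ((n / s : ℕ) : B) = (n : B) := by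
          rw [← Nat.cast_mul, Nat.mul_div_cancel' hsn]
        have e2 : (b ^ (r / s)) ^ (m / (n / s)) = b ^ (r * m / n) := by
          rw [← pow_mul, hexp m hc]
        rw [← mul_assoc, e1, e2]
      · rw [if_neg hc, if_neg (fun h => hc ((hdvd_iff m).1 h)), mul_zero]
  have final := congrArg (PowerSeries.map ψ) univ
  rw [hFnat A R ψ r _ hr hccA] at final
  rw [show PowerSeries.map ψ (1 - C x * X ^ n) = 1 - C a * X ^ n by
    simp [map_sub, map_one, map_mul, map_pow, PowerSeries.map_C, PowerSeries.map_X, hψx]] at final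
  rw [show PowerSeries.map ψ ((1 - C (x ^ (r / s)) * X ^ (n / s)) ^ s)
      = (1 - C (a ^ (r / s)) * X ^ (n / s)) ^ s by
    simp [map_sub, map_one, map_mul, map_pow, PowerSeries.map_C, PowerSeries.map_X, hψx]] at final
  exact final
end

section
/- Let R be a unique factorization domain and let P ⊂ R[t] be a prime ideal of height one such that P + (t) = R[t]. Then P is generated by a polynomial of the form 1 − t·f(t) for some f(t) ∈ R[t]. -/
theorem stmt_10 (R : Type*) [CommRing R] [IsDomain R] [UniqueFactorizationMonoid R]
    (P : Ideal (Polynomial R)) (hP : P.IsPrime)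
    (hne : P ≠ ⊥) (hht : ∀ Q : Ideal (Polynomial R), Q.IsPrime → Q < P → Q = ⊥)
    (hco : P ⊔ Ideal.span {(Polynomial.X : Polynomial R)} = ⊤) :
    ∃ f : Polynomial R, P = Ideal.span {1 - Polynomial.X * f} := by
  classical
  obtain ⟨q, hqP, hq⟩ := hP.exists_mem_prime_of_ne_bot hne
  -- P = span {q}
  have hspan_le : Ideal.span {q} ≤ P := by
    rwa [Ideal.span_singleton_le_iff_mem]
  have hspan_prime : (Ideal.span {q}).IsPrime :=
    (Ideal.span_singleton_prime hq.ne_zero).mpr hq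
  have hPeq : P = Ideal.span {q} := by
    rcases lt_or_eq_of_le hspan_le with h | h
    · exact absurd (hht _ hspan_prime h) (by
        simp [Ideal.span_singleton_eq_bot, hq.ne_zero])
    · exact h.symm
  -- from coprimality, get 1 = a + b with a ∈ span q, b ∈ span X
  have h1 : (1 : Polynomial R) ∈ P ⊔ Ideal.span {(Polynomial.X : Polynomial R)} := by
    rw [hco]; trivial
  rw [Submodule.mem_sup] at h1
  obtain ⟨a, ha, b, hb, hab⟩ := h1
  rw [hPeq, Ideal.mem_span_singleton] at ha
  obtain ⟨c, hc⟩ := ha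
  rw [Ideal.mem_span_singleton] at hb
  obtain ⟨d, hd⟩ := hb
  -- evaluate at 0
  have hev : q.eval 0 * c.eval 0 = 1 := by
    have := congrArg (Polynomial.eval 0) hab
    simp [hc, hd] at this
    exact this
  -- u := c.eval 0, then C u * q has constant coeff 1
  set u := c.eval 0 with hu
  have hunit : IsUnit (Polynomial.C u : Polynomial R) := by
    refine IsUnit.of_mul_eq_one (Polynomial.C (q.eval 0)) ?_
    rw [← Polynomial.C_mul]
    rw [mul_comm] at hev
    rw [hev, Polynomial.C_1]
  have hcoeff : (Polynomial.C u * q - 1).coeff 0 = 0 := by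
    simp [Polynomial.coeff_zero_eq_eval_zero, mul_comm, hev]
  have hXdvd : (Polynomial.X : Polynomial R) ∣ (Polynomial.C u * q - 1) :=
    Polynomial.X_dvd_iff.mpr hcoeff
  obtain ⟨g, hg⟩ := hXdvd
  refine ⟨-g, ?_⟩
  have : 1 - Polynomial.X * (-g) = Polynomial.C u * q := by
    rw [mul_neg, sub_neg_eq_add]
    linear_combination -hg
  rw [this, hPeq]
  exact (Ideal.span_singleton_eq_span_singleton.mpr
    (Associated.symm ⟨hunit.unit, by simp [mul_comm]⟩)).symm
end
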